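/- Let V be a real vector space of dimension n(k+1) with k ≥ 2, let ω¹,...,ω^k be alternating bilinear forms on V, and W ⊂ V a subspace of dimension nk with ω^α|_{W×W} = 0 for all α and ∩_{α=1}^k ker ω^α = {0}. Define W_β = ∩_{α ≠ β} ker ω^α for β = 1,...,k. Then W = W_1 ⊕ ... ⊕ W_k and each W_β has dimension n. -/
import Mathlib

open Module Submodule LinearMap Function

/-- The map `W → (Fin k → Dual (V ⧸ W))`, `w ↦ (α ↦ ω^α(w,·))`, well defined since
`W` is isotropic for every `ω^α`. -/
noncomputable def ksympRho {V : Type*} [AddCommGroup V] [Module ℝ V]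
    {k : ℕ} (ω : Fin k → V →ₗ[ℝ] Module.Dual ℝ V)
    (W : Submodule ℝ V) (hiso : ∀ α : Fin k, ∀ u ∈ W, ∀ v ∈ W, ω α u v = 0) :
    ↥W →ₗ[ℝ] (Fin k → Module.Dual ℝ (V ⧸ W)) where
  toFun w := fun α => W.liftQ (ω α w.1) (fun v hv => LinearMap.mem_ker.mpr (hiso α w.1 w.2 v hv))
  map_add' u v := by
    funext α
    refine Submodule.linearMap_qext _ ?_
    ext x
    simp
  map_smul' c u := by
    funext α
    refine Submodule.linearMap_qext _ ?_
    ext x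
    simp

/-- In a `k`-symplectic vector space with `k ≥ 2`, the subspaces
`W_β = ⋂_{α ≠ β} ker ω^α` yield a direct sum decomposition
`W = W_1 ⊕ ⋯ ⊕ W_k`, and each `W_β` has dimension `n`. -/
theorem ksymplectic_polarisation_decomposition
    (V : Type*) [AddCommGroup V] [Module ℝ V] [FiniteDimensional ℝ V]
    (n k : ℕ) (hk : 2 ≤ k)
    (hdim : Module.finrank ℝ V = n * (k + 1))
    (ω : Fin k → V →ₗ[ℝ] Module.Dual ℝ V)
    (halt : ∀ (α : Fin k) (v w : V), ω α v w = - ω α w v)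
    (W : Submodule ℝ V) (hW : Module.finrank ℝ ↥W = n * k)
    (hiso : ∀ α : Fin k, ∀ u ∈ W, ∀ v ∈ W, ω α u v = 0)
    (hker : (⨅ α : Fin k, LinearMap.ker (ω α)) = ⊥) :
    iSupIndep
        (fun β : Fin k => ⨅ (α : Fin k) (_ : α ≠ β), LinearMap.ker (ω α)) ∧
    (⨆ β : Fin k, ⨅ (α : Fin k) (_ : α ≠ β), LinearMap.ker (ω α)) = W ∧
    (∀ β : Fin k,
      Module.finrank ℝ ↥(⨅ (α : Fin k) (_ : α ≠ β), LinearMap.ker (ω α)) = n) := by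
  classical
  have hnk : n * (k + 1) = n * k + n := by ring
  set Wb : Fin k → Submodule ℝ V :=
    fun β => ⨅ (α : Fin k) (_ : α ≠ β), LinearMap.ker (ω α) with hWbdef
  set ρ : ↥W →ₗ[ℝ] (Fin k → Module.Dual ℝ (V ⧸ W)) := ksympRho ω W hiso with hρdef
  have hρapp : ∀ (w : W) (α : Fin k) (v : V), ρ w α (W.mkQ v) = ω α w.1 v := fun _ _ _ => rfl
  have hρ0 : ∀ (w : W) (α : Fin k), ρ w α = 0 ↔ w.1 ∈ LinearMap.ker (ω α) := by
    intro w α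
    constructor
    · intro h
      rw [LinearMap.mem_ker]
      ext v
      have h2 := hρapp w α v
      rw [h] at h2
      simpa using h2.symm
    · intro h
      refine Submodule.linearMap_qext _ ?_
      ext v
      have h0 : ω α w.1 = 0 := LinearMap.mem_ker.mp h
      have h2 := hρapp w α v
      rw [h0] at h2
      simpa using h2
  -- injectivity of ρ
  have hinj : Function.Injective ρ := by
    rw [← LinearMap.ker_eq_bot, Submodule.eq_bot_iff]
    intro w hw
    have hw0 : ρ w = 0 := LinearMap.mem_ker.mp hw
    have hmem : w.1 ∈ ⨅ α : Fin k, LinearMap.ker (ω α) :=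
      Submodule.mem_iInf _ |>.mpr fun α => (hρ0 w α).mp (congrFun hw0 α)
    rw [hker, Submodule.mem_bot] at hmem
    exact Subtype.ext hmem
  -- dimension counts
  have hQ : finrank ℝ (V ⧸ W) = n := by
    have h := Submodule.finrank_quotient_add_finrank W
    rw [hdim, hW] at h
    omega
  set D := Module.Dual ℝ (V ⧸ W) with hDdef
  have hD : finrank ℝ D = n := by
    show finrank ℝ (Module.Dual ℝ (V ⧸ W)) = n
    rw [Subspace.dual_finrank_eq, hQ]
  have hPi : finrank ℝ (Fin k → D) = n * k := by
    rw [Module.finrank_pi_fintype, Finset.sum_const, Finset.card_univ, Fintype.card_fin, hD,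
      smul_eq_mul, mul_comm]
  set e : ↥W ≃ₗ[ℝ] (Fin k → D) :=
    ρ.linearEquivOfInjective hinj (by rw [hW, hPi]) with hedef
  -- the coordinate subspaces of the product
  set P : Fin k → Submodule ℝ (Fin k → D) :=
    fun β => ⨅ (α : Fin k) (_ : α ≠ β), LinearMap.ker (LinearMap.proj α) with hPdef
  have hPmem : ∀ (f : Fin k → D) (β : Fin k), f ∈ P β ↔ ∀ α, α ≠ β → f α = 0 := by
    intro f β
    simp [hPdef, Submodule.mem_iInf, LinearMap.mem_ker, LinearMap.proj_apply]
  have hPsingle : ∀ β, P β = LinearMap.range (LinearMap.single ℝ (fun _ : Fin k => D) β) := by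
    intro β
    ext f
    rw [hPmem, LinearMap.mem_range]
    constructor
    · intro h
      refine ⟨f β, funext fun α => ?_⟩
      by_cases hab : α = β
      · subst hab; simp
      · simp [LinearMap.single_apply, Pi.single_eq_of_ne hab, h α hab]
    · rintro ⟨x, rfl⟩ α hab
      simp [LinearMap.single_apply, Pi.single_eq_of_ne hab]
  have hPrank : ∀ β, finrank ℝ (P β) = n := by
    intro β
    rw [hPsingle β, LinearMap.finrank_range_of_inj
      (LinearMap.ker_eq_bot.mp (LinearMap.ker_single ℝ _ β)), hD]
  have hPtop : (⨆ β, P β) = ⊤ := by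
    rw [eq_top_iff]
    intro f _
    have hf : f = ∑ β : Fin k, Pi.single β (f β) := (Finset.univ_sum_single f).symm
    rw [hf]
    refine Submodule.sum_mem _ fun β _ => Submodule.mem_iSup_of_mem β ?_
    rw [hPmem]
    intro α hab
    exact Pi.single_eq_of_ne hab _
  have hPind : iSupIndep P := by
    intro β
    refine Submodule.disjoint_def.mpr fun f hf1 hf2 => ?_
    have hle : (⨆ γ, ⨆ (_ : γ ≠ β), P γ) ≤ LinearMap.ker (LinearMap.proj β) := by
      refine iSup_le fun γ => iSup_le fun hgb => ?_
      exact iInf_le_of_le β (iInf_le _ (Ne.symm hgb))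
    have hfβ : f β = 0 := LinearMap.mem_ker.mp (hle hf2)
    funext α
    by_cases hab : α = β
    · subst hab; exact hfβ
    · exact (hPmem f β).mp hf1 α hab
  -- comparing `comap W.subtype (Wb β)` with `comap e (P β)`
  have hCeq : ∀ β, Submodule.comap W.subtype (Wb β)
      = Submodule.comap (e : ↥W →ₗ[ℝ] (Fin k → D)) (P β) := by
    intro β
    ext w
    simp only [Submodule.mem_comap, hPmem, hWbdef, Submodule.mem_iInf]
    constructor
    · intro h α hab
      exact (hρ0 w α).mpr (h α hab)
    · intro h α hab
      exact (hρ0 w α).mp (h α hab)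
  have hCrank : ∀ β, finrank ℝ ↥(Submodule.comap W.subtype (Wb β)) = n := by
    intro β
    rw [hCeq β, Submodule.comap_equiv_eq_map_symm, LinearEquiv.finrank_map_eq, hPrank β]
  have hCtop : (⨆ β, Submodule.comap W.subtype (Wb β)) = ⊤ := by
    have h1 : ∀ β, Submodule.comap W.subtype (Wb β)
        = Submodule.map (e.symm : (Fin k → D) →ₗ[ℝ] ↥W) (P β) := by
      intro β
      rw [hCeq β, Submodule.comap_equiv_eq_map_symm]
    simp_rw [h1]
    rw [← Submodule.map_iSup, hPtop, Submodule.map_top]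
    exact LinearEquiv.range _
  have hCind : iSupIndep (fun β => Submodule.comap W.subtype (Wb β)) := by
    have heq : (fun β => Submodule.comap W.subtype (Wb β))
        = (Submodule.orderIsoMapComap e.symm ∘ P) := by
      funext β
      rw [Function.comp_apply, hCeq β, Submodule.comap_equiv_eq_map_symm]
      rfl
    rw [heq, iSupIndep_map_orderIso_iff]
    exact hPind
  -- every `ker (ω α)` is contained in `W`
  have hkerproj : ∀ α : Fin k,
      finrank ℝ ↥(LinearMap.ker (LinearMap.proj α : (Fin k → D) →ₗ[ℝ] D)) + n = n * k := by
    intro α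
    have h2 := LinearMap.finrank_range_add_finrank_ker (LinearMap.proj α : (Fin k → D) →ₗ[ℝ] D)
    rw [hPi] at h2
    have h3 : LinearMap.range (LinearMap.proj α : (Fin k → D) →ₗ[ℝ] D) = ⊤ :=
      LinearMap.range_eq_top.mpr (Function.surjective_eval α)
    rw [h3, finrank_top, hD] at h2
    omega
  have hkc : ∀ α : Fin k,
      finrank ℝ ↥(Submodule.comap W.subtype (LinearMap.ker (ω α))) + n = n * k := by
    intro α
    have h1 : Submodule.comap W.subtype (LinearMap.ker (ω α))
        = Submodule.comap (e : ↥W →ₗ[ℝ] (Fin k → D))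
            (LinearMap.ker (LinearMap.proj α : (Fin k → D) →ₗ[ℝ] D)) := by
      ext w
      simp only [Submodule.mem_comap]
      constructor
      · intro h
        exact LinearMap.mem_ker.mpr ((hρ0 w α).mpr h)
      · intro h
        exact (hρ0 w α).mp (LinearMap.mem_ker.mp h)
    rw [h1, Submodule.comap_equiv_eq_map_symm, LinearEquiv.finrank_map_eq]
    exact hkerproj α
  have hKW : ∀ α : Fin k, LinearMap.ker (ω α) ≤ W := by
    intro α
    set s : ↥W →ₗ[ℝ] Module.Dual ℝ V := (ω α).comp W.subtype with hsdef
    have hranks : finrank ℝ ↥(LinearMap.range s) = n := by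
      have h0 := LinearMap.finrank_range_add_finrank_ker s
      rw [hW] at h0
      have h1 : LinearMap.ker s = Submodule.comap W.subtype (LinearMap.ker (ω α)) :=
        LinearMap.ker_comp _ _
      rw [h1] at h0
      have h2 := hkc α
      omega
    have hkert : LinearMap.ker s.flip = (LinearMap.range s).dualCoannihilator := by
      ext v
      rw [LinearMap.mem_ker, Submodule.mem_dualCoannihilator]
      constructor
      · rintro h f ⟨w, rfl⟩
        have h2 : s.flip v w = 0 := by rw [h]; rfl
        simpa [LinearMap.flip_apply] using h2
      · intro h
        ext w
        simpa [LinearMap.flip_apply] using h (s w) ⟨w, rfl⟩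
    have hWle : W ≤ LinearMap.ker s.flip := by
      intro v hv
      rw [LinearMap.mem_ker]
      ext w
      simpa [LinearMap.flip_apply, hsdef, LinearMap.comp_apply] using hiso α w.1 w.2 v hv
    have hfr : finrank ℝ ↥(LinearMap.ker s.flip) = n * k := by
      rw [hkert]
      have h2 := Subspace.finrank_add_finrank_dualCoannihilator_eq (LinearMap.range s)
      rw [hranks, hdim] at h2
      omega
    have hWeq : W = LinearMap.ker s.flip :=
      Submodule.eq_of_le_of_finrank_le hWle (by rw [hfr, hW])
    intro v hv
    rw [hWeq, LinearMap.mem_ker]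
    ext w
    have h0 : ω α v = 0 := LinearMap.mem_ker.mp hv
    have h1 : ω α w.1 v = - ω α v w.1 := halt α w.1 v
    simp [LinearMap.flip_apply, hsdef, LinearMap.comp_apply, h1, h0]
  have hWble : ∀ β, Wb β ≤ W := by
    intro β
    obtain ⟨α, hab⟩ : ∃ α : Fin k, α ≠ β := by
      have : Nontrivial (Fin k) := Fin.nontrivial_iff_two_le.mpr hk
      exact exists_ne β
    calc Wb β ≤ LinearMap.ker (ω α) := iInf_le_of_le α (iInf_le _ hab)
    _ ≤ W := hKW α
  have hmapC : ∀ β, Submodule.map W.subtype (Submodule.comap W.subtype (Wb β)) = Wb β := by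
    intro β
    rw [Submodule.map_comap_subtype]
    exact inf_of_le_right (hWble β)
  refine ⟨?_, ?_, ?_⟩
  · -- independence
    intro β
    have hsup2 : (⨆ γ, ⨆ (_ : γ ≠ β), Wb γ)
        = Submodule.map W.subtype (⨆ γ, ⨆ (_ : γ ≠ β), Submodule.comap W.subtype (Wb γ)) := by
      rw [Submodule.map_iSup]
      refine iSup_congr fun γ => ?_
      rw [Submodule.map_iSup]
      exact iSup_congr fun _ => (hmapC γ).symm
    refine Submodule.disjoint_def.mpr fun x hx1 hx2 => ?_
    rw [hsup2] at hx2
    obtain ⟨y, hy, rfl⟩ := hx2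
    have hy1 : y ∈ Submodule.comap W.subtype (Wb β) := hx1
    have hy0 : y = 0 := Submodule.disjoint_def.mp (hCind β) y hy1 hy
    rw [hy0]
    simp
  · -- the supremum is W
    have h1 : (⨆ β, Wb β) = Submodule.map W.subtype (⨆ β, Submodule.comap W.subtype (Wb β)) := by
      rw [Submodule.map_iSup]
      exact (iSup_congr fun β => (hmapC β).symm)
    rw [h1, hCtop, Submodule.map_top, Submodule.range_subtype]
  · -- dimensions
    intro β
    show finrank ℝ ↥(Wb β) = n
    rw [← hmapC β, Submodule.finrank_map_subtype_eq, hCrank β]
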